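/- Let h : ℝ → ℂ be continuously differentiable with h(t)/t → 0 as |t| → ∞, and let x ∈ ℝ be such that the principal-value integral defining 𝔊(h)(x) exists. Then x·𝔊(h)(x) = (1/2)·h(0)·x·sign(x) + i·𝔊(Λh)(x), where also the principal-value integral defining 𝔊(Λh)(x) exists. -/

import Mathlib

open MeasureTheory Filter Set
open scoped Real Topology

/-- The integrand `e^{-itx} f(t) / t` of the integral defining `𝔊(f)(x)`. -/
noncomputable def pvI (f : ℝ → ℂ) (x t : ℝ) : ℂ :=
  Complex.exp (-(Complex.I) * t * x) * f t / t

/-- `HasG f x L` means that the principal-value integral defining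
`𝔊(f)(x) = (i/(2π)) p.v.∫_{-∞}^∞ e^{-itx} f(t) dt/t` exists and equals `L`, where
`p.v.∫ = lim_{ε↓0, A↑∞} (∫_{-A}^{-ε} + ∫_ε^A)`. -/
def HasG (f : ℝ → ℂ) (x : ℝ) (L : ℂ) : Prop :=
  Tendsto (fun q : ℝ × ℝ =>
      (Complex.I / (2 * (Real.pi : ℂ))) *
        ((∫ t in (-q.2)..(-q.1), pvI f x t) + ∫ t in q.1..q.2, pvI f x t))
    ((𝓝[>] (0 : ℝ)) ×ˢ atTop) (𝓝 L)

/-- The operator `Λ`: `(Λh)(t) = -(h(0) - [h(t) + h'(t)(-t)])/t` for `t ≠ 0`, `(Λh)(0) = 0`. -/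
noncomputable def Lam (h : ℝ → ℂ) (t : ℝ) : ℂ :=
  if t = 0 then 0 else -((h 0 - (h t + deriv h t * (-(t : ℂ)))) / (t : ℂ))

section dirichletAux
open intervalIntegral



lemma abs_sin_div_le (t : ℝ) : |Real.sin t / t| ≤ 1 := by
  rcases eq_or_ne t 0 with rfl | ht
  · simp
  · rw [abs_div]
    exact div_le_one_of_le₀ Real.abs_sin_le_abs (abs_nonneg t)

lemma intervalIntegrable_sin_div (a b : ℝ) :
    IntervalIntegrable (fun t => Real.sin t / t) volume a b := by
  rw [intervalIntegrable_iff]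
  refine Integrable.mono' (g := fun _ => (1:ℝ)) ?_ ?_ ?_
  · rw [Set.uIoc]; exact integrableOn_const measure_Ioc_lt_top.ne
  · exact (Real.measurable_sin.div measurable_id).aestronglyMeasurable
  · exact Filter.Eventually.of_forall fun t => by
      simpa [Real.norm_eq_abs, abs_div] using abs_sin_div_le t

lemma inner_val (u A : ℝ) :
    ∫ t in (0:ℝ)..A, Real.sin t * Real.exp (-(t*u))
      = (1 - Real.exp (-(u*A)) * (Real.cos A + u * Real.sin A)) / (1 + u^2) := by
  set c : ℂ := -u + Complex.I with hc
  have hcne : c ≠ 0 := by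
    intro hh
    have : (c).im = 0 := by rw [hh]; simp
    simp [hc] at this
  have hint : IntervalIntegrable (fun t : ℝ => Complex.exp (c * t)) volume 0 A :=
    (Complex.continuous_exp.comp (by continuity)).intervalIntegrable _ _
  have h1 : ∀ t : ℝ, Real.sin t * Real.exp (-(t*u)) = (Complex.exp (c * t)).im := by
    intro t
    rw [Complex.exp_im]
    have hre : (c * (t:ℂ)).re = -(t*u) := by simp [hc, mul_comm]
    have him : (c * (t:ℂ)).im = t := by simp [hc]
    rw [hre, him]; ring
  calc ∫ t in (0:ℝ)..A, Real.sin t * Real.exp (-(t*u))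
      = ∫ t in (0:ℝ)..A, Complex.imCLM (Complex.exp (c * t)) := by
        simp only [Complex.imCLM_apply]; exact integral_congr fun t _ => h1 t
    _ = Complex.imCLM (∫ t in (0:ℝ)..A, Complex.exp (c * t)) :=
        ContinuousLinearMap.intervalIntegral_comp_comm _ hint
    _ = ((Complex.exp (c * A) - Complex.exp (c * 0)) / c).im := by
        rw [integral_exp_mul_complex hcne]; rfl
    _ = (1 - Real.exp (-(u*A)) * (Real.cos A + u * Real.sin A)) / (1 + u^2) := by
        have hre : (Complex.exp (c * (A:ℂ))).re = Real.exp (-(u*A)) * Real.cos A := by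
          rw [Complex.exp_re]
          have : (c * (A:ℂ)).re = -(u*A) := by simp [hc, mul_comm]
          rw [this]
          have : (c * (A:ℂ)).im = A := by simp [hc]
          rw [this]
        have him : (Complex.exp (c * (A:ℂ))).im = Real.exp (-(u*A)) * Real.sin A := by
          rw [Complex.exp_im]
          have h1 : (c * (A:ℂ)).re = -(u*A) := by simp [hc, mul_comm]
          have h2 : (c * (A:ℂ)).im = A := by simp [hc]
          rw [h1, h2]
        rw [mul_zero, Complex.exp_zero, Complex.div_im, Complex.sub_im, Complex.sub_re,
          hre, him]
        have hnorm : Complex.normSq c = 1 + u^2 := by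
          simp [Complex.normSq_apply, hc]; ring
        rw [hnorm]
        simp [hc]
        have hpos : (0:ℝ) < 1 + u^2 := by positivity
        field_simp
        ring

lemma exp_Ioi_val {t : ℝ} (ht : 0 < t) :
    ∫ u in Ioi (0:ℝ), Real.exp (-(t*u)) = 1/t := by
  have := integral_comp_mul_left_Ioi (fun x => Real.exp (-x)) 0 ht
  simp only [mul_zero, integral_exp_neg_Ioi, Real.exp_zero, smul_eq_mul, mul_one] at this
  simpa [neg_mul] using this




lemma err_integrableOn {A : ℝ} (hA : 0 < A) :
    IntegrableOn (fun u => Real.exp (-(u*A)) * (Real.cos A + u * Real.sin A) / (1 + u^2))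
      (Ioi (0:ℝ)) := by
  refine Integrable.mono' (g := fun u => 2 * Real.exp (-A * u))
    (((exp_neg_integrableOn_Ioi 0 hA)).const_mul 2) ?_ ?_
  · exact Continuous.aestronglyMeasurable
      (Continuous.div (by continuity) (by continuity) (fun u => by positivity)) |>.restrict
  · refine (ae_restrict_iff' measurableSet_Ioi).2 (Filter.Eventually.of_forall fun u hu => ?_)
    have hu' : (0:ℝ) < u := hu
    have h1 : |Real.cos A + u * Real.sin A| ≤ 1 + u := by
      calc |Real.cos A + u * Real.sin A| ≤ |Real.cos A| + |u * Real.sin A| := abs_add_le _ _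
        _ ≤ 1 + u := by
            have := Real.abs_cos_le_one A
            have h2 : |u * Real.sin A| ≤ u := by
              rw [abs_mul, abs_of_pos hu']
              nlinarith [Real.abs_sin_le_one A, abs_nonneg (Real.sin A)]
            linarith
    have hpos : (0:ℝ) < 1 + u^2 := by positivity
    show _ ≤ 2 * Real.exp (-A * u)
    rw [Real.norm_eq_abs, abs_div, abs_of_pos hpos, abs_mul, abs_of_pos (Real.exp_pos _)]
    rw [neg_mul, mul_comm A u]
    rw [div_le_iff₀ hpos]
    have h3 : 1 + u ≤ 2 * (1 + u^2) := by nlinarith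
    calc Real.exp (-(u*A)) * |Real.cos A + u * Real.sin A|
        ≤ Real.exp (-(u*A)) * (1 + u) := by
          exact mul_le_mul_of_nonneg_left h1 (Real.exp_pos _).le
      _ ≤ Real.exp (-(u*A)) * (2 * (1 + u^2)) :=
          mul_le_mul_of_nonneg_left h3 (Real.exp_pos _).le
      _ = 2 * Real.exp (-(u*A)) * (1 + u^2) := by ring

lemma J_eq {A : ℝ} (hA : 0 < A) :
    ∫ t in Ioc (0:ℝ) A, Real.sin t / t
      = π/2 - ∫ u in Ioi (0:ℝ),
          Real.exp (-(u*A)) * (Real.cos A + u * Real.sin A) / (1 + u^2) := by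
  have hmeas : AEStronglyMeasurable
      (Function.uncurry fun t u : ℝ => Real.sin t * Real.exp (-(t * u)))
      ((volume.restrict (Ioc (0:ℝ) A)).prod (volume.restrict (Ioi (0:ℝ)))) := by
    refine Continuous.aestronglyMeasurable ?_
    exact (Real.continuous_sin.comp continuous_fst).mul
      (Real.continuous_exp.comp (continuous_fst.mul continuous_snd).neg)
  have hint : Integrable (Function.uncurry fun t u => Real.sin t * Real.exp (-(t * u)))
      ((volume.restrict (Ioc (0:ℝ) A)).prod (volume.restrict (Ioi (0:ℝ)))) := by
    refine (integrable_prod_iff hmeas).2 ⟨?_, ?_⟩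
    · refine (ae_restrict_iff' measurableSet_Ioc).2 (Filter.Eventually.of_forall fun t ht => ?_)
      have ht' : 0 < t := ht.1
      have := (exp_neg_integrableOn_Ioi 0 ht').const_mul (Real.sin t)
      simpa [neg_mul] using this
    · refine Integrable.mono' (g := fun _ => (1:ℝ))
        (integrableOn_const measure_Ioc_lt_top.ne) ?_ ?_
      · exact hmeas.norm.integral_prod_right'
      · refine (ae_restrict_iff' measurableSet_Ioc).2 (Filter.Eventually.of_forall fun t ht => ?_)
        have ht' : 0 < t := ht.1
        have hval : ∫ u in Ioi (0:ℝ), ‖Real.sin t * Real.exp (-(t*u))‖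
            = |Real.sin t| * (1/t) := by
          rw [← exp_Ioi_val ht', ← MeasureTheory.integral_const_mul]
          congr 1; ext u
          rw [Real.norm_eq_abs, abs_mul, abs_of_pos (Real.exp_pos _)]
        simp only [Function.uncurry]
        rw [hval, mul_one_div, Real.norm_eq_abs, abs_div, abs_abs, abs_of_pos ht',
          div_le_one ht']
        exact Real.abs_sin_le_abs.trans (le_of_eq (abs_of_pos ht'))
  have hswap := integral_integral_swap hint
  have hL : (∫ t in Ioc (0:ℝ) A, ∫ u in Ioi (0:ℝ), Real.sin t * Real.exp (-(t * u)))
      = ∫ t in Ioc (0:ℝ) A, Real.sin t / t := by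
    refine setIntegral_congr_fun measurableSet_Ioc fun t ht => ?_
    have ht' : 0 < t := ht.1
    rw [MeasureTheory.integral_const_mul, exp_Ioi_val ht', mul_one_div]
  have hR : (∫ u in Ioi (0:ℝ), ∫ t in Ioc (0:ℝ) A, Real.sin t * Real.exp (-(t * u)))
      = ∫ u in Ioi (0:ℝ),
          (1 - Real.exp (-(u*A)) * (Real.cos A + u * Real.sin A)) / (1 + u^2) := by
    refine setIntegral_congr_fun measurableSet_Ioi fun u _ => ?_
    rw [← intervalIntegral.integral_of_le hA.le, inner_val]
  rw [hL, hR] at hswap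
  rw [hswap]
  have hsplit : ∀ u : ℝ,
      (1 - Real.exp (-(u*A)) * (Real.cos A + u * Real.sin A)) / (1 + u^2)
      = (1 + u^2)⁻¹ - Real.exp (-(u*A)) * (Real.cos A + u * Real.sin A) / (1 + u^2) := by
    intro u; have : (0:ℝ) < 1 + u^2 := by positivity
    field_simp
  simp_rw [hsplit]
  rw [integral_sub (integrable_inv_one_add_sq.integrableOn) (err_integrableOn hA)]
  rw [integral_Ioi_inv_one_add_sq, Real.arctan_zero, sub_zero]




lemma err_tendsto :
    Tendsto (fun A : ℝ => ∫ u in Ioi (0:ℝ),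
        Real.exp (-(u*A)) * (Real.cos A + u * Real.sin A) / (1 + u^2))
      atTop (𝓝 0) := by
  have main := MeasureTheory.tendsto_integral_filter_of_dominated_convergence
    (μ := volume.restrict (Ioi (0:ℝ))) (l := atTop)
    (F := fun A u => Real.exp (-(u*A)) * (Real.cos A + u * Real.sin A) / (1 + u^2))
    (f := fun _ => (0:ℝ)) (fun u => 2 * Real.exp (-u)) ?_ ?_ ?_ ?_
  · simpa using main
  · refine Filter.Eventually.of_forall fun A => ?_
    exact Continuous.aestronglyMeasurable
      (Continuous.div (by continuity) (by continuity) (fun u => by positivity)) |>.restrict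
  · filter_upwards [eventually_ge_atTop (1:ℝ)] with A hA
    refine (ae_restrict_iff' measurableSet_Ioi).2 (Filter.Eventually.of_forall fun u hu => ?_)
    have hu' : (0:ℝ) < u := hu
    have hpos : (0:ℝ) < 1 + u^2 := by positivity
    have h1 : |Real.cos A + u * Real.sin A| ≤ 1 + u := by
      calc |Real.cos A + u * Real.sin A| ≤ |Real.cos A| + |u * Real.sin A| := abs_add_le _ _
        _ ≤ 1 + u := by
            have := Real.abs_cos_le_one A
            have h2 : |u * Real.sin A| ≤ u := by
              rw [abs_mul, abs_of_pos hu']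
              nlinarith [Real.abs_sin_le_one A, abs_nonneg (Real.sin A)]
            linarith
    have hexp : Real.exp (-(u*A)) ≤ Real.exp (-u) := by
      apply Real.exp_le_exp.2; nlinarith
    rw [Real.norm_eq_abs, abs_div, abs_of_pos hpos, abs_mul, abs_of_pos (Real.exp_pos _),
      div_le_iff₀ hpos]
    have h3 : 1 + u ≤ 2 * (1 + u^2) := by nlinarith
    calc Real.exp (-(u*A)) * |Real.cos A + u * Real.sin A|
        ≤ Real.exp (-u) * (1 + u) := by
          exact mul_le_mul hexp h1 (abs_nonneg _) (Real.exp_pos _).le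
      _ ≤ Real.exp (-u) * (2 * (1 + u^2)) :=
          mul_le_mul_of_nonneg_left h3 (Real.exp_pos _).le
      _ = 2 * Real.exp (-u) * (1 + u^2) := by ring
  · have := (exp_neg_integrableOn_Ioi (0:ℝ) one_pos).const_mul 2
    simpa [neg_one_mul] using this
  · refine (ae_restrict_iff' measurableSet_Ioi).2 (Filter.Eventually.of_forall fun u hu => ?_)
    have hu' : (0:ℝ) < u := hu
    have hpos : (0:ℝ) < 1 + u^2 := by positivity
    apply squeeze_zero_norm (a := fun A => (1+u)/(1+u^2) * Real.exp (-(u*A)))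
    · intro A
      have h1 : |Real.cos A + u * Real.sin A| ≤ 1 + u := by
        calc |Real.cos A + u * Real.sin A| ≤ |Real.cos A| + |u * Real.sin A| := abs_add_le _ _
          _ ≤ 1 + u := by
              have := Real.abs_cos_le_one A
              have h2 : |u * Real.sin A| ≤ u := by
                rw [abs_mul, abs_of_pos hu']
                nlinarith [Real.abs_sin_le_one A, abs_nonneg (Real.sin A)]
              linarith
      rw [Real.norm_eq_abs, abs_div, abs_of_pos hpos, abs_mul, abs_of_pos (Real.exp_pos _)]
      rw [div_le_iff₀ hpos]
      calc Real.exp (-(u*A)) * |Real.cos A + u * Real.sin A|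
          ≤ Real.exp (-(u*A)) * (1+u) := mul_le_mul_of_nonneg_left h1 (Real.exp_pos _).le
        _ = (1+u)/(1+u^2) * Real.exp (-(u*A)) * (1+u^2) := by field_simp
    · have hexp : Tendsto (fun A : ℝ => Real.exp (-(u*A))) atTop (𝓝 0) := by
        apply Real.tendsto_exp_atBot.comp
        exact tendsto_neg_atBot_iff.2 (tendsto_id.const_mul_atTop hu')
      have := hexp.const_mul ((1+u)/(1+u^2))
      simpa using this

lemma dirichlet_atTop :
    Tendsto (fun A : ℝ => ∫ t in (0:ℝ)..A, Real.sin t / t) atTop (𝓝 (π/2)) := by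
  have heq : ∀ᶠ A in atTop, ∫ t in (0:ℝ)..A, Real.sin t / t
      = π/2 - ∫ u in Ioi (0:ℝ),
          Real.exp (-(u*A)) * (Real.cos A + u * Real.sin A) / (1 + u^2) := by
    filter_upwards [eventually_gt_atTop (0:ℝ)] with A hA
    rw [intervalIntegral.integral_of_le hA.le, ← J_eq hA]
  rw [show (π/2 : ℝ) = π/2 - 0 by ring]
  exact Tendsto.congr' (heq.mono fun A hA => hA.symm) (tendsto_const_nhds.sub err_tendsto)

lemma dirichlet_prod :
    Tendsto (fun p : ℝ × ℝ => ∫ t in p.1..p.2, Real.sin t / t)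
      ((𝓝[>] (0:ℝ)) ×ˢ atTop) (𝓝 (π/2)) := by
  have heq : ∀ p : ℝ × ℝ, (∫ t in p.1..p.2, Real.sin t / t)
      = (∫ t in (0:ℝ)..p.2, Real.sin t / t) - ∫ t in (0:ℝ)..p.1, Real.sin t / t := by
    intro p
    rw [intervalIntegral.integral_interval_sub_left (intervalIntegrable_sin_div 0 p.2)
      (intervalIntegrable_sin_div 0 p.1)]
  simp_rw [heq]
  rw [show (π/2 : ℝ) = π/2 - 0 by ring]
  refine Tendsto.sub (dirichlet_atTop.comp tendsto_snd) ?_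
  have hzero : Tendsto (fun a : ℝ => ∫ t in (0:ℝ)..a, Real.sin t / t) (𝓝[>] 0) (𝓝 0) := by
    apply squeeze_zero_norm (a := fun a => |a|)
    · intro a
      have := intervalIntegral.norm_integral_le_of_norm_le_const
        (C := 1) (f := fun t => Real.sin t / t) (a := 0) (b := a) ?_
      · simpa using this
      · intro t _; simpa [Real.norm_eq_abs, abs_div] using abs_sin_div_le t
    · have h := (continuous_abs : Continuous fun a : ℝ => |a|).tendsto 0
      rw [abs_zero] at h
      exact h.mono_left nhdsWithin_le_nhds
  exact hzero.comp tendsto_fst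

lemma tendsto_mul_pos_nhdsGT {x : ℝ} (hx : 0 < x) :
    Tendsto (fun a : ℝ => a * x) (𝓝[>] (0:ℝ)) (𝓝[>] (0:ℝ)) := by
  refine tendsto_nhdsWithin_of_tendsto_nhds_of_eventually_within _ ?_ ?_
  · have : Tendsto (fun a : ℝ => a * x) (𝓝 0) (𝓝 (0 * x)) :=
      (continuous_mul_right x).tendsto 0
    rw [zero_mul] at this
    exact this.mono_left nhdsWithin_le_nhds
  · exact eventually_mem_nhdsWithin.mono fun a (ha : (0:ℝ) < a) => mul_pos ha hx

lemma sin_scaled_integral {x : ℝ} (hx : x ≠ 0) (a b : ℝ) :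
    (∫ t in a..b, Real.sin (t * x) / t) = x * ∫ t in a..b, Real.sin (t*x) / (t*x) := by
  rw [← intervalIntegral.integral_const_mul]
  refine intervalIntegral.integral_congr fun t _ => ?_
  rcases eq_or_ne t 0 with rfl | ht
  · simp
  · field_simp

lemma sin_scaled_comp {x : ℝ} (hx : x ≠ 0) (a b : ℝ) :
    (∫ t in a..b, Real.sin (t*x) / (t*x)) = x⁻¹ • ∫ u in a*x..b*x, Real.sin u / u :=
  intervalIntegral.integral_comp_mul_right (fun u => Real.sin u / u) hx

lemma dirichlet_pos {x : ℝ} (hx : 0 < x) :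
    Tendsto (fun p : ℝ × ℝ => ∫ t in p.1..p.2, Real.sin (t * x) / t)
      ((𝓝[>] (0:ℝ)) ×ˢ atTop) (𝓝 (π/2)) := by
  have heq : ∀ p : ℝ × ℝ, (∫ t in p.1..p.2, Real.sin (t * x) / t)
      = ∫ u in p.1*x..p.2*x, Real.sin u / u := by
    intro p
    rw [sin_scaled_integral hx.ne', sin_scaled_comp hx.ne', smul_eq_mul, ← mul_assoc,
      mul_inv_cancel₀ hx.ne', one_mul]
  have base : Tendsto (fun p : ℝ × ℝ => ∫ u in p.1*x..p.2*x, Real.sin u / u)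
      ((𝓝[>] (0:ℝ)) ×ˢ atTop) (𝓝 (π/2)) := by
    have hmap : Tendsto (fun p : ℝ × ℝ => (p.1 * x, p.2 * x))
        ((𝓝[>] (0:ℝ)) ×ˢ atTop) ((𝓝[>] (0:ℝ)) ×ˢ atTop) :=
      Tendsto.prodMk ((tendsto_mul_pos_nhdsGT hx).comp tendsto_fst)
        ((tendsto_snd (f := 𝓝[>] (0:ℝ)) (g := atTop)).atTop_mul_const hx)
    have h2 := dirichlet_prod.comp hmap
    exact h2
  exact base.congr fun p => (heq p).symm

lemma dirichlet_sign (x : ℝ) :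
    Tendsto (fun p : ℝ × ℝ => ∫ t in p.1..p.2, Real.sin (t * x) / t)
      ((𝓝[>] (0:ℝ)) ×ˢ atTop) (𝓝 (π/2 * Real.sign x)) := by
  rcases lt_trichotomy x 0 with hx | rfl | hx
  · have hneg : ∀ p : ℝ × ℝ, (∫ t in p.1..p.2, Real.sin (t * x) / t)
        = -∫ t in p.1..p.2, Real.sin (t * (-x)) / t := by
      intro p
      rw [← intervalIntegral.integral_neg]
      refine intervalIntegral.integral_congr fun t _ => ?_
      rw [show t * x = -(t * (-x)) by ring, Real.sin_neg]
      ring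
    rw [show π/2 * Real.sign x = -(π/2) by rw [Real.sign_of_neg hx]; ring]
    exact Tendsto.congr (fun p => (hneg p).symm) (dirichlet_pos (by linarith)).neg
  · simp only [mul_zero, Real.sin_zero, zero_div, intervalIntegral.integral_zero]
    simpa [Real.sign_zero] using (tendsto_const_nhds :
      Tendsto (fun _ : ℝ × ℝ => (0:ℝ)) ((𝓝[>] (0:ℝ)) ×ˢ atTop) (𝓝 0))
  · rw [show π/2 * Real.sign x = π/2 by rw [Real.sign_of_pos hx]; ring]
    exact dirichlet_pos hx

end dirichletAux

noncomputable def Ff (h : ℝ → ℂ) (x : ℝ) (t : ℝ) : ℂ :=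
  Complex.exp (-(Complex.I) * t * x) * ((h t - h 0) / t)

noncomputable def Ff' (h : ℝ → ℂ) (x : ℝ) (t : ℝ) : ℂ :=
  (-(Complex.I) * x) * Ff h x t
    + Complex.exp (-(Complex.I) * t * x) * ((deriv h t * t - (h t - h 0)) / (t:ℂ)^2)

section main
variable (h : ℝ → ℂ) (x : ℝ)

lemma cont_e : Continuous fun t : ℝ => Complex.exp (-(Complex.I) * t * x) :=
  Complex.continuous_exp.comp (by continuity)

lemma hasDerivAt_Ff (hC1 : ContDiff ℝ 1 h) {t : ℝ} (ht : t ≠ 0) :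
    HasDerivAt (Ff h x) (Ff' h x t) t := by
  have hofReal : HasDerivAt (fun s : ℝ => (s:ℂ)) 1 t := by
    simpa using (hasDerivAt_id t).ofReal_comp
  have hexp : HasDerivAt (fun s : ℝ => Complex.exp (-(Complex.I) * s * x))
      ((-(Complex.I) * x) * Complex.exp (-(Complex.I) * t * x)) t := by
    have harg : HasDerivAt (fun s : ℝ => -(Complex.I) * (s:ℂ) * (x:ℂ)) (-(Complex.I) * x) t := by
      simpa using ((hofReal.const_mul (-(Complex.I))).mul_const (x:ℂ))
    have := harg.cexp
    simpa [mul_comm] using this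
  have hg : HasDerivAt (fun s : ℝ => (h s - h 0) / (s:ℂ))
      ((deriv h t * (t:ℂ) - (h t - h 0) * 1) / (t:ℂ)^2) t := by
    have hh : HasDerivAt h (deriv h t) t := (hC1.differentiable one_ne_zero t).hasDerivAt
    exact (hh.sub_const (h 0)).div hofReal (Complex.ofReal_ne_zero.mpr ht)
  have hmul := hexp.mul hg
  convert hmul using 1
  · rfl
  · rfl
  simp only [Ff', Ff]
  ring

lemma pvI_Lam_eq {t : ℝ} (ht : t ≠ 0) :
    pvI (Lam h) x t = -(Ff' h x t) + (-(Complex.I * x)) * pvI h x t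
      + (Complex.I * x * h 0) * (Complex.exp (-(Complex.I) * t * x) / t) := by
  unfold pvI Lam Ff' Ff
  rw [if_neg ht]
  have htC : (t:ℂ) ≠ 0 := Complex.ofReal_ne_zero.mpr ht
  field_simp [htC]
  ring

lemma key (hC1 : ContDiff ℝ 1 h) {a b : ℝ} (hab : (0:ℝ) ∉ uIcc a b) :
    ∫ t in a..b, pvI (Lam h) x t
      = (Ff h x a - Ff h x b) + (-(Complex.I * x)) * (∫ t in a..b, pvI h x t)
        + (Complex.I * x * h 0) * ∫ t in a..b, Complex.exp (-(Complex.I) * t * x) / t := by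
  have hne : ∀ t ∈ uIcc a b, t ≠ 0 := fun t htm h0 => hab (h0 ▸ htm)
  have hcne : ∀ t ∈ uIcc a b, (t:ℂ) ≠ 0 := fun t htm => Complex.ofReal_ne_zero.mpr (hne t htm)
  have hch : Continuous h := hC1.continuous
  have hcd : Continuous (deriv h) := hC1.continuous_deriv le_rfl
  have hcoe : Continuous fun t : ℝ => (t:ℂ) := Complex.continuous_ofReal
  have i1 : IntervalIntegrable (fun t => pvI h x t) volume a b := by
    apply ContinuousOn.intervalIntegrable
    show ContinuousOn (fun t : ℝ => Complex.exp (-(Complex.I) * t * x) * h t / t) _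
    exact ((cont_e x).continuousOn.mul hch.continuousOn).div hcoe.continuousOn hcne
  have i2 : IntervalIntegrable (fun t : ℝ => Complex.exp (-(Complex.I) * t * x) / t)
      volume a b := by
    apply ContinuousOn.intervalIntegrable
    exact (cont_e x).continuousOn.div hcoe.continuousOn hcne
  have iF' : IntervalIntegrable (Ff' h x) volume a b := by
    apply ContinuousOn.intervalIntegrable
    unfold Ff' Ff
    apply ContinuousOn.add
    · apply ContinuousOn.mul continuousOn_const
      apply ContinuousOn.mul (cont_e x).continuousOn
      exact (hch.continuousOn.sub continuousOn_const).div hcoe.continuousOn hcne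
    · apply ContinuousOn.mul (cont_e x).continuousOn
      refine ContinuousOn.div ?_ (hcoe.pow 2).continuousOn
        (fun t htm => pow_ne_zero 2 (hcne t htm))
      exact (hcd.continuousOn.mul hcoe.continuousOn).sub
        (hch.continuousOn.sub continuousOn_const)
  have iF'neg : IntervalIntegrable (fun t => -(Ff' h x t)) volume a b := iF'.neg
  have i1c : IntervalIntegrable (fun t => (-(Complex.I * (x:ℂ))) * pvI h x t) volume a b :=
    i1.const_mul _
  have i2c : IntervalIntegrable
      (fun t : ℝ => (Complex.I * (x:ℂ) * h 0) * (Complex.exp (-(Complex.I) * t * x) / t))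
      volume a b := i2.const_mul _
  have isum : IntervalIntegrable
      (fun t => -(Ff' h x t) + (-(Complex.I * (x:ℂ))) * pvI h x t) volume a b :=
    iF'neg.add i1c
  have hsub : ∫ t in a..b, Ff' h x t = Ff h x b - Ff h x a :=
    intervalIntegral.integral_eq_sub_of_hasDerivAt
      (fun t htm => hasDerivAt_Ff h x hC1 (hne t htm)) iF'
  calc ∫ t in a..b, pvI (Lam h) x t
      = ∫ t in a..b, (-(Ff' h x t) + (-(Complex.I * x)) * pvI h x t
          + (Complex.I * x * h 0) * (Complex.exp (-(Complex.I) * t * x) / t)) :=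
        intervalIntegral.integral_congr fun t htm => pvI_Lam_eq h x (hne t htm)
    _ = (∫ t in a..b, (-(Ff' h x t) + (-(Complex.I * x)) * pvI h x t))
          + ∫ t in a..b, (Complex.I * x * h 0) * (Complex.exp (-(Complex.I) * t * x) / t) :=
        intervalIntegral.integral_add isum i2c
    _ = (∫ t in a..b, -(Ff' h x t)) + (∫ t in a..b, (-(Complex.I * x)) * pvI h x t)
          + (Complex.I * x * h 0) * ∫ t in a..b, Complex.exp (-(Complex.I) * t * x) / t := by
        rw [intervalIntegral.integral_add iF'neg i1c,
          intervalIntegral.integral_const_mul, intervalIntegral.integral_const_mul]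
    _ = _ := by
        rw [intervalIntegral.integral_neg, hsub, intervalIntegral.integral_const_mul]
        ring

lemma D_eq {a b : ℝ} (ha : 0 < a) (hb : 0 < b) :
    ((∫ t in (-b)..(-a), Complex.exp (-(Complex.I) * t * x) / t)
        + ∫ t in a..b, Complex.exp (-(Complex.I) * t * x) / t)
      = (-2*Complex.I) * (((∫ t in a..b, Real.sin (t*x) / t) : ℝ) : ℂ) := by
  have hne : ∀ t ∈ uIcc a b, t ≠ 0 := fun t htm =>
    ne_of_gt (lt_of_lt_of_le (lt_min ha hb) htm.1)
  have hcne : ∀ t ∈ uIcc a b, (t:ℂ) ≠ 0 := fun t htm => Complex.ofReal_ne_zero.mpr (hne t htm)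
  have hcoe : Continuous fun t : ℝ => (t:ℂ) := Complex.continuous_ofReal
  have i2 : IntervalIntegrable (fun t : ℝ => Complex.exp (-(Complex.I) * t * x) / t)
      volume a b := by
    apply ContinuousOn.intervalIntegrable
    exact (cont_e x).continuousOn.div hcoe.continuousOn hcne
  have i3 : IntervalIntegrable (fun t : ℝ => Complex.exp (-(Complex.I) * (-(t:ℂ)) * x) / (-(t:ℂ)))
      volume a b := by
    apply ContinuousOn.intervalIntegrable
    refine ContinuousOn.div ?_ hcoe.neg.continuousOn
      (fun t htm => neg_ne_zero.mpr (hcne t htm))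
    exact (Complex.continuous_exp.comp (by continuity)).continuousOn
  have h1 : (∫ t in (-b)..(-a), Complex.exp (-(Complex.I) * t * x) / t)
      = ∫ t in a..b, Complex.exp (-(Complex.I) * (-(t:ℂ)) * x) / (-(t:ℂ)) := by
    rw [← intervalIntegral.integral_comp_neg (fun t : ℝ => Complex.exp (-(Complex.I) * t * x) / t)]
    refine intervalIntegral.integral_congr fun t _ => ?_
    push_cast
    ring_nf
  rw [h1, ← intervalIntegral.integral_add i3 i2]
  have hptwise : ∀ t ∈ uIcc a b,
      Complex.exp (-(Complex.I) * (-(t:ℂ)) * x) / (-(t:ℂ))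
        + Complex.exp (-(Complex.I) * t * x) / (t:ℂ)
      = (-2*Complex.I) * (((Real.sin (t*x) / t : ℝ)) : ℂ) := by
    intro t htm
    have htC : (t:ℂ) ≠ 0 := hcne t htm
    have e1 : Complex.exp (-(Complex.I) * t * x)
        = Complex.cos ((t:ℂ)*(x:ℂ)) - Complex.sin ((t:ℂ)*(x:ℂ)) * Complex.I := by
      rw [show -(Complex.I) * (t:ℂ) * (x:ℂ) = (-((t:ℂ)*(x:ℂ))) * Complex.I by ring,
        Complex.exp_mul_I, Complex.cos_neg, Complex.sin_neg]
      ring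
    have e2 : Complex.exp (-(Complex.I) * (-(t:ℂ)) * x)
        = Complex.cos ((t:ℂ)*(x:ℂ)) + Complex.sin ((t:ℂ)*(x:ℂ)) * Complex.I := by
      rw [show -(Complex.I) * (-(t:ℂ)) * (x:ℂ) = ((t:ℂ)*(x:ℂ)) * Complex.I by ring,
        Complex.exp_mul_I]
    rw [e1, e2, div_neg, neg_add_eq_sub, ← sub_div]
    push_cast
    ring
  rw [intervalIntegral.integral_congr hptwise, intervalIntegral.integral_const_mul,
    intervalIntegral.integral_ofReal]

lemma Ff_norm (t : ℝ) : ‖Ff h x t‖ = ‖(h t - h 0) / (t:ℂ)‖ := by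
  unfold Ff
  rw [norm_mul]
  have : ‖Complex.exp (-(Complex.I) * t * x)‖ = 1 := by
    rw [Complex.norm_exp]
    have : (-(Complex.I) * (t:ℂ) * (x:ℂ)).re = 0 := by simp
    rw [this, Real.exp_zero]
  rw [this, one_mul]

lemma tendsto_Ff_cocompact
    (hdecay : Tendsto (fun t : ℝ => h t / (t : ℂ)) (cocompact ℝ) (𝓝 0)) :
    Tendsto (Ff h x) (cocompact ℝ) (𝓝 0) := by
  have hg : Tendsto (fun t : ℝ => (h t - h 0) / (t:ℂ)) (cocompact ℝ) (𝓝 0) := by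
    have hinvR : Tendsto (fun t : ℝ => t⁻¹) (cocompact ℝ) (𝓝 0) := by
      rw [cocompact_eq_atBot_atTop, tendsto_sup]
      refine ⟨?_, tendsto_inv_atTop_zero⟩
      have hcomp := (tendsto_inv_atTop_zero (𝕜 := ℝ)).comp tendsto_neg_atBot_atTop
      have h2 := hcomp.neg
      simp only [Function.comp] at h2
      simpa [inv_neg] using h2
    have hinv : Tendsto (fun t : ℝ => ((t:ℂ))⁻¹) (cocompact ℝ) (𝓝 0) := by
      have hof := (Complex.continuous_ofReal.tendsto 0).comp hinvR
      simp only [Function.comp_def] at hof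
      rw [Complex.ofReal_zero] at hof
      exact hof.congr fun t => Complex.ofReal_inv t
    have h2 : Tendsto (fun t : ℝ => h 0 / (t:ℂ)) (cocompact ℝ) (𝓝 0) := by
      have := hinv.const_mul (h 0)
      simpa [div_eq_mul_inv] using this
    have := hdecay.sub h2
    simp only [sub_zero] at this
    refine this.congr fun t => ?_
    rw [sub_div]
  apply squeeze_zero_norm (a := fun t => ‖(h t - h 0) / (t:ℂ)‖)
  · exact fun t => le_of_eq (Ff_norm h x t)
  · have := hg.norm
    simpa using this

lemma tendsto_Ff_punctured (hC1 : ContDiff ℝ 1 h) :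
    Tendsto (Ff h x) (𝓝[≠] (0:ℝ)) (𝓝 (deriv h 0)) := by
  have hslope := hasDerivAt_iff_tendsto_slope.1 (hC1.differentiable one_ne_zero 0).hasDerivAt
  have hs2 : Tendsto (fun t : ℝ => (h t - h 0) / (t:ℂ)) (𝓝[≠] (0:ℝ)) (𝓝 (deriv h 0)) := by
    refine hslope.congr fun t => ?_
    rw [slope_def_module, sub_zero, Complex.real_smul, Complex.ofReal_inv]
    rw [div_eq_inv_mul]
  have hexp : Tendsto (fun t : ℝ => Complex.exp (-(Complex.I) * t * x)) (𝓝 (0:ℝ)) (𝓝 1) := by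
    have := (cont_e x).tendsto 0
    simpa using this
  have := (hexp.mono_left nhdsWithin_le_nhds).mul hs2
  rw [one_mul] at this
  exact this.congr fun t => by rw [Ff]

lemma tendsto_neg_GT : Tendsto (fun a : ℝ => -a) (𝓝[>] (0:ℝ)) (𝓝[≠] (0:ℝ)) := by
  refine tendsto_nhdsWithin_of_tendsto_nhds_of_eventually_within _ ?_ ?_
  · have := (continuous_neg : Continuous fun a : ℝ => -a).tendsto 0
    rw [neg_zero] at this
    exact this.mono_left nhdsWithin_le_nhds
  · exact eventually_mem_nhdsWithin.mono fun a (ha : (0:ℝ) < a) =>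
      (neg_ne_zero.mpr (ne_of_gt ha) : -a ≠ 0)

theorem stmt0 (h : ℝ → ℂ) (x : ℝ) (Gh : ℂ)
    (hC1 : ContDiff ℝ 1 h)
    (hdecay : Tendsto (fun t : ℝ => h t / (t : ℂ)) (cocompact ℝ) (𝓝 0))
    (hGh : HasG h x Gh) :
    ∃ GLh : ℂ, HasG (Lam h) x GLh ∧
      (x : ℂ) * Gh
        = (1 / 2 : ℂ) * h 0 * (x : ℂ) * ((Real.sign x : ℝ) : ℂ) + Complex.I * GLh := by
  have hπ : ((Real.pi : ℝ) : ℂ) ≠ 0 := Complex.ofReal_ne_zero.mpr Real.pi_ne_zero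
  set l := ((𝓝[>] (0:ℝ)) ×ˢ (atTop : Filter ℝ)) with hl
  set c1 : ℂ := -(Complex.I * (x:ℂ)) with hc1
  set c2 : ℂ := Complex.I * (x:ℂ) * h 0 with hc2
  set σ : ℂ := ((π/2 * Real.sign x : ℝ) : ℂ) with hσ
  set GLh : ℂ := Complex.I / (2*(π:ℂ)) *
      ((0:ℂ) + c1 * ((2*(π:ℂ))/Complex.I * Gh) + c2 * ((-2*Complex.I) * σ)) with hGLh
  have hBtend : Tendsto (fun q : ℝ × ℝ =>
      (Ff h x (-q.2) - Ff h x (-q.1)) + (Ff h x q.1 - Ff h x q.2)) l (𝓝 0) := by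
    have hcc := tendsto_Ff_cocompact h x hdecay
    have htop : Tendsto (fun q : ℝ × ℝ => Ff h x q.2) l (𝓝 0) :=
      hcc.comp ((tendsto_snd (f := 𝓝[>] (0:ℝ))).mono_right
        (by rw [cocompact_eq_atBot_atTop]; exact le_sup_right))
    have hbot : Tendsto (fun q : ℝ × ℝ => Ff h x (-q.2)) l (𝓝 0) := by
      have hsnd : Tendsto (fun q : ℝ × ℝ => -q.2) l atBot :=
        tendsto_neg_atTop_atBot.comp (tendsto_snd (f := 𝓝[>] (0:ℝ)))
      exact hcc.comp (hsnd.mono_right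
        (by rw [cocompact_eq_atBot_atTop]; exact le_sup_left))
    have hpun := tendsto_Ff_punctured h x hC1
    have hfst : Tendsto (fun q : ℝ × ℝ => Ff h x q.1) l (𝓝 (deriv h 0)) := by
      refine hpun.comp ((tendsto_fst (g := (atTop : Filter ℝ))).mono_right
        (nhdsWithin_mono 0 fun t ht => ?_))
      exact ne_of_gt ht
    have hnfst : Tendsto (fun q : ℝ × ℝ => Ff h x (-q.1)) l (𝓝 (deriv h 0)) :=
      hpun.comp (tendsto_neg_GT.comp (tendsto_fst (g := (atTop : Filter ℝ))))
    have := (hbot.sub hnfst).add (hfst.sub htop)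
    have h0 : (0:ℂ) - deriv h 0 + (deriv h 0 - 0) = 0 := by ring
    rwa [h0] at this
  have hStend : Tendsto (fun q : ℝ × ℝ =>
      (∫ t in (-q.2)..(-q.1), pvI h x t) + ∫ t in q.1..q.2, pvI h x t) l
      (𝓝 ((2*(π:ℂ))/Complex.I * Gh)) := by
    have h1 := hGh.const_mul ((2*(π:ℂ))/Complex.I)
    refine h1.congr fun q => ?_
    rw [← mul_assoc]
    rw [show (2*(π:ℂ))/Complex.I * (Complex.I / (2 * (π:ℂ))) = 1 by
      field_simp]
    rw [one_mul]
  have hDtend : Tendsto (fun q : ℝ × ℝ =>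
      (-2*Complex.I) * (((∫ t in q.1..q.2, Real.sin (t*x) / t) : ℝ) : ℂ)) l
      (𝓝 ((-2*Complex.I) * σ)) := by
    have hd := dirichlet_sign x
    have := (Complex.continuous_ofReal.tendsto _).comp hd
    exact (this.const_mul (-2*Complex.I)).congr fun q => rfl
  have hmain : Tendsto (fun q : ℝ × ℝ =>
      (Complex.I / (2 * (π : ℂ))) *
        (((Ff h x (-q.2) - Ff h x (-q.1)) + (Ff h x q.1 - Ff h x q.2))
          + c1 * ((∫ t in (-q.2)..(-q.1), pvI h x t) + ∫ t in q.1..q.2, pvI h x t)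
          + c2 * ((-2*Complex.I) * (((∫ t in q.1..q.2, Real.sin (t*x) / t) : ℝ) : ℂ)))) l
      (𝓝 GLh) := by
    rw [hGLh]
    exact ((hBtend.add (hStend.const_mul c1)).add
      ((hDtend.const_mul c2).congr fun q => rfl)).const_mul _
  have hev : ∀ᶠ q : ℝ × ℝ in l,
      (Complex.I / (2 * (π : ℂ))) *
        (((Ff h x (-q.2) - Ff h x (-q.1)) + (Ff h x q.1 - Ff h x q.2))
          + c1 * ((∫ t in (-q.2)..(-q.1), pvI h x t) + ∫ t in q.1..q.2, pvI h x t)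
          + c2 * ((-2*Complex.I) * (((∫ t in q.1..q.2, Real.sin (t*x) / t) : ℝ) : ℂ)))
      = (Complex.I / (2 * (π : ℂ))) *
        ((∫ t in (-q.2)..(-q.1), pvI (Lam h) x t) + ∫ t in q.1..q.2, pvI (Lam h) x t) := by
    have hev1 : ∀ᶠ q : ℝ × ℝ in l, 0 < q.1 ∧ 1 ≤ q.2 :=
      Filter.Eventually.prod_mk eventually_mem_nhdsWithin (eventually_ge_atTop 1)
    filter_upwards [hev1] with q hq
    obtain ⟨hq1, hq2⟩ := hq
    have hq2' : (0:ℝ) < q.2 := lt_of_lt_of_le one_pos hq2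
    have k1 := key h x hC1 (notMem_uIcc_of_lt hq1 hq2')
    have k2 := key h x hC1 (a := -q.2) (b := -q.1)
      (notMem_uIcc_of_gt (neg_lt_zero.mpr hq2') (neg_lt_zero.mpr hq1))
    have d := D_eq x hq1 hq2'
    rw [k1, k2, ← d]
    ring
  refine ⟨GLh, ?_, ?_⟩
  · exact Tendsto.congr' hev hmain
  · rw [hGLh, hσ]
    push_cast
    field_simp
    ring_nf
    rw [hc1, hc2]
    linear_combination (2*(x:ℂ)*Gh*(π:ℂ) + (x:ℂ)*(π:ℂ)*h 0*((Real.sign x : ℝ) : ℂ)*(Complex.I^2-1)) * Complex.I_sq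
end main
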